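/- Let n ≥ 2, α ∈ [0, 1/2], τ ∈ (0,1), X a measurable space, and D a probability measure on X × [n]. Then for every measurable g : X → R^n, er^{ℓ^α}_D[pred^CS_τ ∘ g] − er^{ℓ^α,*}_D ≤ ( er^{ψ^{CS,α}}_D[g] − er^{ψ^{CS,α},*}_D ) / ( 2 min(τ, 1−τ) ). -/

import Mathlib

open scoped BigOperators ENNReal
open MeasureTheory

/-- The abstain(α) loss: `ℓ^α(y,t) = 0` if `t = y`, `α` if `t = n+1`, and `1` otherwise. -/
noncomputable def abstainLoss (n : ℕ) (α : ℝ) (y : Fin n) (t : Fin (n + 1)) : ℝ :=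
  if t = Fin.last n then α else if (t : ℕ) = (y : ℕ) then 0 else 1

/-- Generalized Crammer–Singer surrogate:
`ψ^{CS,α}(y,u) = 2·max( α·max_{j≠y} γ(u_j − u_y), (1−α)·max_{j≠y} γ(u_j − u_y) ) + 2α`,
where `γ(a) = max(a, −1)`. -/
noncomputable def psiCSa (n : ℕ) (α : ℝ) (y : Fin n) (u : Fin n → ℝ) : ℝ :=
  2 * max (α * ⨆ j : {j : Fin n // j ≠ y}, max (u j.1 - u y) (-1))
      ((1 - α) * ⨆ j : {j : Fin n // j ≠ y}, max (u j.1 - u y) (-1)) + 2 * α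

/-- The largest component of `u`. -/
noncomputable def top1 (n : ℕ) (u : Fin n → ℝ) : ℝ := ⨆ i, u i

/-- The second-largest component of `u` (descending order, with multiplicity). -/
noncomputable def top2 (n : ℕ) (u : Fin n → ℝ) : ℝ :=
  ⨅ i, ⨆ j : {j : Fin n // j ≠ i}, u j.1

/-- `pred^CS_τ`: an index attaining `max_i u_i` if `u_(1) − u_(2) > τ` (the maximizer is
unique in this case), and `n+1` otherwise. -/
noncomputable def predCS (n : ℕ) (τ : ℝ) (u : Fin n → ℝ) : Fin (n + 1) :=
  if h : (τ < top1 n u - top2 n u) ∧ ∃ y : Fin n, ∀ i, u i ≤ u y then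
    Fin.castSucc h.2.choose
  else Fin.last n

set_option linter.unusedSectionVars false

section helpers
variable {ι : Type*} [Fintype ι] [Nonempty ι]

lemma le_fin_ciSup (f : ι → ℝ) (i : ι) : f i ≤ ⨆ j, f j :=
  le_ciSup (Set.finite_range f).bddAbove i

lemma fin_ciSup_attained (f : ι → ℝ) : ∃ i, (∀ j, f j ≤ f i) ∧ (⨆ j, f j) = f i := by
  obtain ⟨i, hi⟩ := Finite.exists_max f
  exact ⟨i, hi, le_antisymm (ciSup_le hi) (le_fin_ciSup f i)⟩

lemma fin_ciInf_le (f : ι → ℝ) (i : ι) : (⨅ j, f j) ≤ f i :=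
  ciInf_le (Set.finite_range f).bddBelow i

lemma measurable_fin_ciSup {X : Type*} [MeasurableSpace X] {f : ι → X → ℝ}
    (hf : ∀ i, Measurable (f i)) : Measurable (fun x => ⨆ i, f i x) := by
  have h : (fun x => ⨆ i, f i x)
      = fun x => Finset.univ.sup' Finset.univ_nonempty (fun i => f i x) := by
    funext x; rw [Finset.sup'_univ_eq_ciSup]
  rw [h]
  have := Finset.measurable_sup' (Finset.univ_nonempty (α := ι)) (fun i _ => hf i)
  convert this using 1
  funext x
  simp [Finset.sup'_apply]

lemma finset_measurable_inf' {X : Type*} [MeasurableSpace X] {s : Finset ι} (hs : s.Nonempty)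
    {f : ι → X → ℝ} (hf : ∀ n ∈ s, Measurable (f n)) : Measurable (s.inf' hs f) :=
  Finset.inf'_induction hs _ (fun _f hf _g hg => hf.inf hg) fun n hn => hf n hn

lemma measurable_fin_ciInf {X : Type*} [MeasurableSpace X] {f : ι → X → ℝ}
    (hf : ∀ i, Measurable (f i)) : Measurable (fun x => ⨅ i, f i x) := by
  have h : (fun x => ⨅ i, f i x)
      = fun x => Finset.univ.inf' Finset.univ_nonempty (fun i => f i x) := by
    funext x; rw [Finset.inf'_univ_eq_ciInf]
  rw [h]
  have := finset_measurable_inf' (Finset.univ_nonempty (α := ι)) (fun i _ => hf i)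
  convert this using 1
  funext x
  simp [Finset.inf'_apply]

end helpers

section main
variable {n : ℕ} (hn : 2 ≤ n)
include hn

/-- The capped margin. -/
noncomputable def Mgap (n : ℕ) (y : Fin n) (u : Fin n → ℝ) : ℝ :=
  ⨆ j : {j : Fin n // j ≠ y}, max (u j.1 - u y) (-1)

omit hn in
lemma psiCSa_eq (α : ℝ) (y : Fin n) (u : Fin n → ℝ) :
    psiCSa n α y u = 2 * max (α * Mgap n y u) ((1 - α) * Mgap n y u) + 2 * α := rfl

lemma nonempty_ne (y : Fin n) : Nonempty {j : Fin n // j ≠ y} := by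
  have : Nontrivial (Fin n) := Fin.nontrivial_iff_two_le.2 hn
  obtain ⟨j, hj⟩ := exists_ne y
  exact ⟨⟨j, hj⟩⟩

lemma Mgap_le_of (y : Fin n) (u : Fin n → ℝ) {b : ℝ}
    (h : ∀ j : Fin n, j ≠ y → max (u j - u y) (-1) ≤ b) : Mgap n y u ≤ b := by
  have := nonempty_ne hn y
  exact ciSup_le (fun j => h j.1 j.2)

lemma le_Mgap (y : Fin n) (u : Fin n → ℝ) {j : Fin n} (hj : j ≠ y) :
    max (u j - u y) (-1) ≤ Mgap n y u := by
  have := nonempty_ne hn y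
  exact le_fin_ciSup (fun j : {j : Fin n // j ≠ y} => max (u j.1 - u y) (-1)) ⟨j, hj⟩

lemma neg_one_le_Mgap (y : Fin n) (u : Fin n → ℝ) : (-1 : ℝ) ≤ Mgap n y u := by
  have h := nonempty_ne hn y
  obtain ⟨j⟩ := h
  exact le_trans (le_max_right _ _) (le_Mgap hn y u j.2)

omit hn in
lemma sum_loss_last (α : ℝ) (q : Fin n → ℝ) (hq1 : ∑ y, q y = 1) :
    ∑ y, q y * abstainLoss n α y (Fin.last n) = α := by
  have h : ∀ y : Fin n, abstainLoss n α y (Fin.last n) = α := fun y => if_pos rfl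
  rw [Finset.sum_congr rfl (fun y _ => by rw [h y]), ← Finset.sum_mul, hq1, one_mul]

omit hn in
lemma sum_loss_castSucc (α : ℝ) (q : Fin n → ℝ) (hq1 : ∑ y, q y = 1) (i : Fin n) :
    ∑ y, q y * abstainLoss n α y (Fin.castSucc i) = 1 - q i := by
  have hne : Fin.castSucc i ≠ Fin.last n := (Fin.castSucc_lt_last i).ne
  have : ∀ y : Fin n, q y * abstainLoss n α y (Fin.castSucc i)
      = q y - (if i = y then q y else 0) := by
    intro y
    simp only [abstainLoss, if_neg hne, Fin.coe_castSucc]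
    rcases eq_or_ne i y with h | h
    · simp [h]
    · have : (i : ℕ) ≠ (y : ℕ) := fun hc => h (Fin.val_injective hc)
      simp [this, h]
  rw [Finset.sum_congr rfl (fun y _ => this y), Finset.sum_sub_distrib, hq1,
    Finset.sum_ite_eq Finset.univ i q, if_pos (Finset.mem_univ i)]

omit hn in
lemma top1_eq {u : Fin n → ℝ} {i₀ : Fin n} (h : ∀ j, u j ≤ u i₀) : top1 n u = u i₀ := by
  have : Nonempty (Fin n) := ⟨i₀⟩
  exact le_antisymm (ciSup_le h) (le_fin_ciSup u i₀)

lemma top2_eq {u : Fin n → ℝ} {i₀ : Fin n} (h : ∀ j, u j ≤ u i₀) :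
    top2 n u = ⨆ j : {j : Fin n // j ≠ i₀}, u j.1 := by
  have hne : ∀ y : Fin n, Nonempty {j : Fin n // j ≠ y} := nonempty_ne hn
  have : Nonempty (Fin n) := ⟨i₀⟩
  refine le_antisymm (fin_ciInf_le _ i₀) (le_ciInf fun i => ?_)
  rcases eq_or_ne i i₀ with rfl | hi
  · exact le_rfl
  · have h1 : (⨆ j : {j : Fin n // j ≠ i₀}, u j.1) ≤ u i₀ := ciSup_le fun j => h j.1
    exact h1.trans (le_fin_ciSup (fun j : {j : Fin n // j ≠ i} => u j.1) ⟨i₀, hi.symm⟩)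

end main

section pred
variable {n : ℕ} (hn : 2 ≤ n) {τ : ℝ}
include hn

omit hn in
lemma exists_argmax (u : Fin n → ℝ) [Nonempty (Fin n)] : ∃ y : Fin n, ∀ i, u i ≤ u y := by
  obtain ⟨i, hi, _⟩ := fin_ciSup_attained u; exact ⟨i, hi⟩

omit hn in
lemma argmax_unique {u : Fin n → ℝ} (hτ0 : 0 < τ) (hgt : τ < top1 n u - top2 n u)
    {y₁ y₂ : Fin n} (h1 : ∀ i, u i ≤ u y₁) (h2 : ∀ i, u i ≤ u y₂) : y₁ = y₂ := by
  have hNE : Nonempty (Fin n) := ⟨y₁⟩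
  by_contra hne
  have h12 : u y₁ = u y₂ := le_antisymm (h2 y₁) (h1 y₂)
  have htop : top1 n u ≤ top2 n u := by
    refine le_ciInf fun i => ?_
    rcases eq_or_ne y₁ i with rfl | hy
    · have hy2 : y₂ ≠ y₁ := fun h => hne h.symm
      have : Nonempty {j : Fin n // j ≠ y₁} := ⟨⟨y₂, hy2⟩⟩
      calc top1 n u = u y₂ := by rw [top1_eq h1, h12]
        _ ≤ _ := le_fin_ciSup (fun j : {j : Fin n // j ≠ y₁} => u j.1) ⟨y₂, hy2⟩
    · have : Nonempty {j : Fin n // j ≠ i} := ⟨⟨y₁, hy⟩⟩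
      calc top1 n u = u y₁ := top1_eq h1
        _ ≤ _ := le_fin_ciSup (fun j : {j : Fin n // j ≠ i} => u j.1) ⟨y₁, hy⟩
  linarith

omit hn in
lemma predCS_eq_castSucc {u : Fin n → ℝ} (hτ0 : 0 < τ) {i₀ : Fin n}
    (h : ∀ j, u j ≤ u i₀) (hgt : τ < top1 n u - top2 n u) :
    predCS n τ u = Fin.castSucc i₀ := by
  have hcond : (τ < top1 n u - top2 n u) ∧ ∃ y : Fin n, ∀ i, u i ≤ u y := ⟨hgt, ⟨i₀, h⟩⟩
  rw [predCS, dif_pos hcond]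
  exact congrArg Fin.castSucc (argmax_unique hτ0 hgt hcond.2.choose_spec h)

omit hn in
lemma predCS_eq_last {u : Fin n → ℝ} (h : ¬ τ < top1 n u - top2 n u) :
    predCS n τ u = Fin.last n := dif_neg (fun hc => h hc.1)

omit hn in
lemma predCS_eq_last_iff [Nonempty (Fin n)] {u : Fin n → ℝ} :
    predCS n τ u = Fin.last n ↔ ¬ τ < top1 n u - top2 n u := by
  refine ⟨fun h => ?_, predCS_eq_last⟩
  by_contra hgt
  have hcond : (τ < top1 n u - top2 n u) ∧ ∃ y : Fin n, ∀ i, u i ≤ u y :=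
    ⟨hgt, exists_argmax u⟩
  rw [predCS, dif_pos hcond] at h
  exact absurd h (Fin.castSucc_lt_last _).ne

omit hn in
lemma predCS_eq_castSucc_iff (hτ0 : 0 < τ) {u : Fin n → ℝ} {i : Fin n} :
    predCS n τ u = Fin.castSucc i ↔ (τ < top1 n u - top2 n u) ∧ ∀ j, u j ≤ u i := by
  constructor
  · intro h
    by_cases hgt : τ < top1 n u - top2 n u
    · have : Nonempty (Fin n) := ⟨i⟩
      have hcond : (τ < top1 n u - top2 n u) ∧ ∃ y : Fin n, ∀ i, u i ≤ u y :=
        ⟨hgt, exists_argmax u⟩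
      rw [predCS, dif_pos hcond] at h
      have hci : hcond.2.choose = i := Fin.castSucc_injective n h
      exact ⟨hgt, hci ▸ hcond.2.choose_spec⟩
    · rw [predCS_eq_last hgt] at h
      exact absurd h.symm (Fin.castSucc_lt_last _).ne
  · rintro ⟨hgt, h⟩
    exact predCS_eq_castSucc hτ0 h hgt

end pred

section master
variable {n : ℕ} {α τ : ℝ}

lemma min_two_mul (a b : ℝ) : min (2*a) (2*b) = 2 * min a b := by
  rcases le_total a b with h | h
  · rw [min_eq_left (by linarith), min_eq_left h]
  · rw [min_eq_right (by linarith), min_eq_right h]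

lemma commit_arith {α τ c m r t : ℝ} (hα0 : 0 ≤ α) (hα1 : α ≤ 1/2) (hτ0 : 0 < τ) (hτ1 : τ < 1)
    (hc2τ : c ≤ 2*τ) (hcpos : 0 < c) (hmα : m ≤ α) (hm0 : 0 ≤ m) (hmr : m ≤ r) (hr1 : r ≤ 1)
    (htτ : τ < t) (ht1 : t ≤ 1) :
    c * (r - m) + 2 * m ≤ (1 - r) * (2*α*(-t) + 2*α) + r * (2*(1-α)*t + 2*α) := by
  have hc2 : c ≤ 2 := by linarith
  have hΔτ : 0 ≤ (1-r)*(2*α*(-τ) + 2*α) + r*(2*(1-α)*τ + 2*α) - (c*(r - m) + 2*m) := by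
    rcases le_total α r with h | h
    · nlinarith [mul_nonneg (by linarith : (0:ℝ) ≤ 2*τ - c) (by linarith : (0:ℝ) ≤ r - α),
        mul_nonneg (by linarith : (0:ℝ) ≤ 2 - c) (by linarith : (0:ℝ) ≤ α - m)]
    · nlinarith [mul_nonneg (by linarith : (0:ℝ) ≤ 1 - τ) (by linarith : (0:ℝ) ≤ α - r),
        mul_nonneg (by linarith : (0:ℝ) ≤ 2 - c) (by linarith : (0:ℝ) ≤ r - m)]
  have hΔ1 : 0 ≤ (1-r)*(2*α*(-1) + 2*α) + r*(2*(1-α)*1 + 2*α) - (c*(r - m) + 2*m) := by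
    nlinarith [mul_nonneg (by linarith : (0:ℝ) ≤ 2 - c) (by linarith : (0:ℝ) ≤ r - m)]
  have h0 : 0 ≤ (1-τ) * ((1-r)*(2*α*(-t) + 2*α) + r*(2*(1-α)*t + 2*α) - (c*(r - m) + 2*m)) := by
    have e : (1-τ) * ((1-r)*(2*α*(-t) + 2*α) + r*(2*(1-α)*t + 2*α) - (c*(r - m) + 2*m))
        = (1-t) * ((1-r)*(2*α*(-τ) + 2*α) + r*(2*(1-α)*τ + 2*α) - (c*(r - m) + 2*m))
          + (t-τ) * ((1-r)*(2*α*(-1) + 2*α) + r*(2*(1-α)*1 + 2*α) - (c*(r - m) + 2*m)) := by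
      ring
    rw [e]
    have h1 := mul_nonneg (by linarith : (0:ℝ) ≤ 1 - t) hΔτ
    have h2 := mul_nonneg (by linarith : (0:ℝ) ≤ t - τ) hΔ1
    linarith
  nlinarith [h0]

lemma abstain_arith {α τ c m r s : ℝ} (hα0 : 0 ≤ α) (hα1 : α ≤ 1/2) (hτ0 : 0 < τ) (hτ1 : τ < 1)
    (hc2τ' : c ≤ 2*(1-τ)) (hcpos : 0 < c) (hmα : m ≤ α) (hm0 : 0 ≤ m) (hmr : m ≤ r) (hr1 : r ≤ 1)
    (hs0 : 0 ≤ s) (hsτ : s ≤ τ) :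
    c * (α - m) + 2 * m ≤ (1 - r) * (2*α*(-s) + 2*α) + r * (2*(1-α)*s + 2*α) := by
  have hc2 : c ≤ 2 := by linarith
  rcases le_total α r with h | h
  · nlinarith [mul_nonneg (by linarith : (0:ℝ) ≤ 2 - c) (by linarith : (0:ℝ) ≤ α - m),
      mul_nonneg hs0 (by linarith : (0:ℝ) ≤ r - α)]
  · nlinarith [mul_nonneg (by linarith : (0:ℝ) ≤ 2 - 2*τ - c) (by linarith : (0:ℝ) ≤ α - m),
      mul_nonneg (by linarith : (0:ℝ) ≤ τ - s) (by linarith : (0:ℝ) ≤ α - r),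
      mul_nonneg (by linarith : (0:ℝ) ≤ τ) (by linarith : (0:ℝ) ≤ r - m)]

lemma master (hn : 2 ≤ n) (hα0 : 0 ≤ α) (hα1 : α ≤ 1/2) (hτ0 : 0 < τ) (hτ1 : τ < 1)
    (q : Fin n → ℝ) (hq0 : ∀ y, 0 ≤ q y) (hq1 : ∑ y, q y = 1) (u : Fin n → ℝ) :
    2 * min τ (1-τ) * ((∑ y, q y * abstainLoss n α y (predCS n τ u)) - min α (1 - ⨆ y, q y))
      + min (2*α) (2*(1 - ⨆ y, q y)) ≤ ∑ y, q y * psiCSa n α y u := by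
  have hNE : Nonempty (Fin n) := ⟨⟨0, by omega⟩⟩
  set c := 2 * min τ (1-τ) with hc
  have hc2τ : c ≤ 2*τ := by have := min_le_left τ (1-τ); simp only [hc]; linarith
  have hc2τ' : c ≤ 2*(1-τ) := by have := min_le_right τ (1-τ); simp only [hc]; linarith
  have hcpos : 0 < c := by
    have : 0 < min τ (1-τ) := lt_min hτ0 (by linarith)
    simp only [hc]; linarith
  set Q := ⨆ y, q y with hQdef
  have hQle : ∀ y, q y ≤ Q := fun y => le_fin_ciSup q y
  obtain ⟨ym, hym, hymeq⟩ := fin_ciSup_attained q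
  have hQ1 : Q ≤ 1 := by
    rw [hQdef, hymeq, ← hq1]
    exact Finset.single_le_sum (fun y _ => hq0 y) (Finset.mem_univ ym)
  have hQ0 : 0 ≤ Q := le_trans (hq0 ym) (hQle ym)
  rw [min_two_mul]
  set m := min α (1 - Q) with hm
  have hmα : m ≤ α := min_le_left _ _
  have hmQ : m ≤ 1 - Q := min_le_right _ _
  have hm0 : 0 ≤ m := le_min hα0 (by linarith)
  -- max of u
  obtain ⟨i₀, hi₀, _⟩ := fin_ciSup_attained u
  have hsub : Nonempty {j : Fin n // j ≠ i₀} := nonempty_ne hn i₀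
  have ht1 : top1 n u = u i₀ := top1_eq hi₀
  set t2 := ⨆ j : {j : Fin n // j ≠ i₀}, u j.1 with ht2def
  have ht2 : top2 n u = t2 := top2_eq hn hi₀
  obtain ⟨js, hjs, hjseq⟩ := fin_ciSup_attained (fun j : {j : Fin n // j ≠ i₀} => u j.1)
  set s := u i₀ - t2 with hs
  have hs0 : 0 ≤ s := by
    have : t2 ≤ u i₀ := by rw [ht2def, hjseq]; exact hi₀ js.1
    simp only [hs]; linarith
  have hub : ∀ y, y ≠ i₀ → u y ≤ t2 := fun y hy =>
    le_fin_ciSup (fun j : {j : Fin n // j ≠ i₀} => u j.1) ⟨y, hy⟩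
  set r := 1 - q i₀ with hr
  have hrQ : 1 - Q ≤ r := by have := hQle i₀; simp only [hr]; linarith
  have hr1 : r ≤ 1 := by have := hq0 i₀; simp only [hr]; linarith
  -- pointwise lower bounds on psi
  have hpsi_i₀ : 2*α*(max (-s) (-1)) + 2*α ≤ psiCSa n α i₀ u := by
    have hM : max (-s) (-1) ≤ Mgap n i₀ u := by
      have : max (u js.1 - u i₀) (-1) ≤ Mgap n i₀ u := le_Mgap hn i₀ u js.2
      have he : u js.1 - u i₀ = -s := by rw [hs, ht2def, hjseq]; ring
      rwa [he] at this
    rw [psiCSa_eq]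
    have h1 : α * max (-s) (-1) ≤ α * Mgap n i₀ u := mul_le_mul_of_nonneg_left hM hα0
    have h2 : α * Mgap n i₀ u ≤ max (α * Mgap n i₀ u) ((1-α) * Mgap n i₀ u) := le_max_left _ _
    linarith
  have hpsi_y : ∀ y, y ≠ i₀ → 2*(1-α)*s + 2*α ≤ psiCSa n α y u := by
    intro y hy
    have hM : s ≤ Mgap n y u := by
      have h1 : max (u i₀ - u y) (-1) ≤ Mgap n y u := le_Mgap hn y u (fun h => hy h.symm)
      have h2 : s ≤ u i₀ - u y := by have := hub y hy; simp only [hs]; linarith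
      exact le_trans (le_trans h2 (le_max_left _ _)) h1
    rw [psiCSa_eq]
    have h1 : (1-α) * s ≤ (1-α) * Mgap n y u := mul_le_mul_of_nonneg_left hM (by linarith)
    have h2 : (1-α) * Mgap n y u ≤ max (α * Mgap n y u) ((1-α) * Mgap n y u) := le_max_right _ _
    linarith
  -- sum lower bound
  have hsum : q i₀ * (2*α*(max (-s) (-1)) + 2*α) + r * (2*(1-α)*s + 2*α)
      ≤ ∑ y, q y * psiCSa n α y u := by
    have hsplit : ∑ y, q y * psiCSa n α y u
        = q i₀ * psiCSa n α i₀ u + ∑ y ∈ Finset.univ.erase i₀, q y * psiCSa n α y u :=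
      (Finset.add_sum_erase _ _ (Finset.mem_univ i₀)).symm
    have hrsum : ∑ y ∈ Finset.univ.erase i₀, q y = r := by
      have := Finset.add_sum_erase Finset.univ q (Finset.mem_univ i₀)
      simp only [hr]; linarith [hq1]
    have h1 : q i₀ * (2*α*(max (-s) (-1)) + 2*α) ≤ q i₀ * psiCSa n α i₀ u :=
      mul_le_mul_of_nonneg_left hpsi_i₀ (hq0 i₀)
    have h2 : r * (2*(1-α)*s + 2*α) ≤ ∑ y ∈ Finset.univ.erase i₀, q y * psiCSa n α y u := by
      rw [← hrsum, Finset.sum_mul]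
      refine Finset.sum_le_sum fun y hy => ?_
      exact mul_le_mul_of_nonneg_left (hpsi_y y (Finset.ne_of_mem_erase hy)) (hq0 y)
    linarith [hsplit]
  clear_value c Q m t2 s r
  refine le_trans ?_ hsum
  by_cases hgt : τ < top1 n u - top2 n u
  · -- commit
    have hL : ∑ y, q y * abstainLoss n α y (predCS n τ u) = r := by
      rw [predCS_eq_castSucc hτ0 hi₀ hgt, sum_loss_castSucc α q hq1 i₀]
      exact hr.symm
    rw [hL]
    have hsτ : τ < s := by rw [ht1, ht2] at hgt; rw [hs]; exact hgt
    set t := min s 1 with htdef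
    have htτ : τ < t := lt_min hsτ (by linarith)
    have ht1' : t ≤ 1 := min_le_right _ _
    have hts : t ≤ s := min_le_left _ _
    have hmax : max (-s) (-1) = -t := by
      rw [htdef]
      rcases le_total s 1 with h | h
      · rw [min_eq_left h, max_eq_left (by linarith)]
      · rw [min_eq_right h, max_eq_right (by linarith)]
    clear_value t
    rw [hmax]
    have hmr : m ≤ r := le_trans hmQ hrQ
    have harith := commit_arith hα0 hα1 hτ0 hτ1 hc2τ hcpos hmα hm0 hmr hr1 htτ ht1'
    have hqi : q i₀ = 1 - r := by rw [hr]; ring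
    rw [hqi]
    have hr0 : 0 ≤ r := le_trans hm0 hmr
    have hmono : r * (2*(1-α)*t + 2*α) ≤ r * (2*(1-α)*s + 2*α) := by
      have h1 : 2*(1-α)*t ≤ 2*(1-α)*s := mul_le_mul_of_nonneg_left hts (by linarith)
      nlinarith
    linarith
  · -- abstain
    have hL : ∑ y, q y * abstainLoss n α y (predCS n τ u) = α := by
      rw [predCS_eq_last hgt, sum_loss_last α q hq1]
    rw [hL]
    have hsτ : s ≤ τ := by rw [ht1, ht2] at hgt; rw [hs]; linarith [not_lt.mp hgt]
    have hmax : max (-s) (-1) = -s := max_eq_left (by linarith)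
    rw [hmax]
    have hmr : m ≤ r := le_trans hmQ hrQ
    have hqi : q i₀ = 1 - r := by rw [hr]; ring
    rw [hqi]
    exact abstain_arith hα0 hα1 hτ0 hτ1 hc2τ' hcpos hmα hm0 hmr hr1 hs0 hsτ

end master
section measure
variable {n : ℕ} {X : Type*} [MeasurableSpace X] (D : Measure (X × Fin n)) [IsProbabilityMeasure D]

lemma slice_fin (y : Fin n) :
    IsFiniteMeasure ((D.restrict (Prod.snd ⁻¹' {y})).map Prod.fst) := by
  refine ⟨?_⟩
  rw [Measure.map_apply measurable_fst MeasurableSet.univ]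
  simp only [Set.preimage_univ]
  rw [Measure.restrict_apply MeasurableSet.univ]
  exact measure_lt_top D _

lemma slice_ac (y : Fin n) :
    (D.restrict (Prod.snd ⁻¹' {y})).map Prod.fst ≪ D.map Prod.fst := by
  refine Measure.AbsolutelyContinuous.mk fun A hA h0 => ?_
  rw [Measure.map_apply measurable_fst hA] at h0 ⊢
  rw [Measure.restrict_apply (measurable_fst hA)]
  exact measure_mono_null Set.inter_subset_left h0

lemma sum_slice :
    (∑ y, (D.restrict (Prod.snd ⁻¹' {y})).map Prod.fst) = D.map Prod.fst := by
  refine Measure.ext fun A hA => ?_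
  rw [Measure.finset_sum_apply, Measure.map_apply measurable_fst hA]
  have h1 : ∀ y : Fin n, ((D.restrict (Prod.snd ⁻¹' {y})).map Prod.fst) A
      = D (Prod.fst ⁻¹' A ∩ Prod.snd ⁻¹' {y}) := by
    intro y
    rw [Measure.map_apply measurable_fst hA, Measure.restrict_apply (measurable_fst hA)]
  rw [Finset.sum_congr rfl fun y _ => h1 y]
  have h2 : Prod.fst ⁻¹' A = ⋃ y ∈ (Finset.univ : Finset (Fin n)),
      (Prod.fst ⁻¹' A ∩ Prod.snd ⁻¹' {y}) := by
    ext z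
    simp
  have hdisj : Set.PairwiseDisjoint (↑(Finset.univ : Finset (Fin n)) : Set (Fin n))
      (fun y => Prod.fst ⁻¹' A ∩ Prod.snd ⁻¹' {y}) := by
    intro y _ y' _ hyy'
    refine Set.disjoint_left.mpr fun z hz hz' => hyy' ?_
    have h1 := hz.2; have h2 := hz'.2
    simp only [Set.mem_preimage, Set.mem_singleton_iff] at h1 h2
    rw [← h1, ← h2]
  have hmeas : ∀ y ∈ (Finset.univ : Finset (Fin n)),
      MeasurableSet (Prod.fst ⁻¹' A ∩ Prod.snd ⁻¹' {y}) :=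
    fun y _ => (measurable_fst hA).inter (measurable_snd (measurableSet_singleton y))
  conv_rhs => rw [h2]
  exact (measure_biUnion_finset hdisj hmeas).symm

lemma sum_rnDeriv_ae :
    ∀ᵐ x ∂(D.map Prod.fst),
      ∑ y, ((D.restrict (Prod.snd ⁻¹' {y})).map Prod.fst).rnDeriv (D.map Prod.fst) x = 1 := by
  set μ := D.map Prod.fst with hμ
  have hfin : ∀ (s : Finset (Fin n)),
      IsFiniteMeasure (∑ y ∈ s, (D.restrict (Prod.snd ⁻¹' {y})).map Prod.fst) := by
    intro s
    refine ⟨?_⟩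
    rw [Measure.finset_sum_apply]
    refine ENNReal.sum_lt_top.mpr fun y _ => ?_
    haveI := slice_fin D y
    exact measure_lt_top _ _
  have key : ∀ s : Finset (Fin n),
      (∑ y ∈ s, (D.restrict (Prod.snd ⁻¹' {y})).map Prod.fst).rnDeriv μ
        =ᵐ[μ] fun x => ∑ y ∈ s, ((D.restrict (Prod.snd ⁻¹' {y})).map Prod.fst).rnDeriv μ x := by
    intro s
    induction s using Finset.induction_on with
    | empty => exact Measure.rnDeriv_zero μ
    | insert a s hns ih =>
      rw [Finset.sum_insert hns]
      haveI := slice_fin D a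
      haveI := hfin s
      have h1 := Measure.rnDeriv_add ((D.restrict (Prod.snd ⁻¹' {a})).map Prod.fst)
        (∑ y ∈ s, (D.restrict (Prod.snd ⁻¹' {y})).map Prod.fst) μ
      filter_upwards [h1, ih] with x hx1 hx2
      rw [hx1]
      simp only [Pi.add_apply, hx2, Finset.sum_insert hns]
  have h2 := key Finset.univ
  rw [sum_slice D] at h2
  have h3 := Measure.rnDeriv_self μ
  filter_upwards [h2.symm.trans h3] with x hx
  exact hx

lemma decomp (F : X × Fin n → ℝ≥0∞) (hF : Measurable F) :
    ∫⁻ z, F z ∂D = ∫⁻ x, ∑ y,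
      ((D.restrict (Prod.snd ⁻¹' {y})).map Prod.fst).rnDeriv (D.map Prod.fst) x * F (x, y)
      ∂(D.map Prod.fst) := by
  set μ := D.map Prod.fst with hμ
  haveI : IsProbabilityMeasure μ := Measure.isProbabilityMeasure_map measurable_fst.aemeasurable
  have step1 : ∫⁻ z, F z ∂D = ∑ y, ∫⁻ z, F z ∂(D.restrict (Prod.snd ⁻¹' {y})) := by
    have hpt : ∀ z : X × Fin n, F z = ∑ y, if z.2 = y then F z else 0 := by
      intro z
      rw [Finset.sum_ite_eq Finset.univ z.2 (fun _ => F z), if_pos (Finset.mem_univ _)]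
    calc ∫⁻ z, F z ∂D = ∫⁻ z, ∑ y, (if z.2 = y then F z else 0) ∂D := by
          exact lintegral_congr hpt
      _ = ∑ y, ∫⁻ z, (if z.2 = y then F z else 0) ∂D := by
          refine lintegral_finset_sum _ fun y _ => ?_
          exact Measurable.ite (measurable_snd (measurableSet_singleton y)) hF measurable_const
      _ = ∑ y, ∫⁻ z, F z ∂(D.restrict (Prod.snd ⁻¹' {y})) := by
          refine Finset.sum_congr rfl fun y _ => ?_
          have : ∀ z, (if z.2 = y then F z else 0)
              = (Prod.snd ⁻¹' {y} : Set (X × Fin n)).indicator F z := by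
            intro z
            classical
            rw [Set.indicator_apply]
            simp only [Set.mem_preimage, Set.mem_singleton_iff]
          rw [lintegral_congr this,
            lintegral_indicator (measurable_snd (measurableSet_singleton y))]
  have step2 : ∀ y : Fin n, ∫⁻ z, F z ∂(D.restrict (Prod.snd ⁻¹' {y}))
      = ∫⁻ x, F (x, y) ∂((D.restrict (Prod.snd ⁻¹' {y})).map Prod.fst) := by
    intro y
    have hmf : Measurable (fun x : X => F (x, y)) := hF.comp (measurable_prodMk_right)
    rw [lintegral_map hmf measurable_fst]
    refine lintegral_congr_ae ?_
    have hae : ∀ᵐ z ∂(D.restrict (Prod.snd ⁻¹' {y})), z.2 = y := by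
      rw [ae_restrict_iff' (measurable_snd (measurableSet_singleton y))]
      exact ae_of_all _ fun z hz => hz
    filter_upwards [hae] with z hz
    rw [← hz]
  have step3 : ∀ y : Fin n, ∫⁻ x, F (x, y) ∂((D.restrict (Prod.snd ⁻¹' {y})).map Prod.fst)
      = ∫⁻ x, ((D.restrict (Prod.snd ⁻¹' {y})).map Prod.fst).rnDeriv μ x * F (x, y) ∂μ := by
    intro y
    haveI := slice_fin D y
    have hmf : Measurable (fun x : X => F (x, y)) := hF.comp (measurable_prodMk_right)
    exact (lintegral_rnDeriv_mul (slice_ac D y) hmf.aemeasurable).symm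
  rw [step1, Finset.sum_congr rfl fun y _ => (step2 y).trans (step3 y),
    ← lintegral_finset_sum]
  intro y _
  exact (Measure.measurable_rnDeriv _ _).mul (hF.comp (measurable_prodMk_right))

end measure
section values
variable {n : ℕ} {α : ℝ}

lemma Mgap_eq_of_const (hn : 2 ≤ n) (y : Fin n) (u : Fin n → ℝ) (cst : ℝ)
    (h : ∀ j : Fin n, j ≠ y → max (u j - u y) (-1) = cst) : Mgap n y u = cst := by
  have := nonempty_ne hn y
  have h2 : (fun j : {j : Fin n // j ≠ y} => max (u j.1 - u y) (-1)) = fun _ => cst := by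
    funext j; exact h j.1 j.2
  unfold Mgap
  rw [h2, ciSup_const]

lemma psi_zero_val (hn : 2 ≤ n) (y : Fin n) : psiCSa n α y (fun _ => 0) = 2*α := by
  rw [psiCSa_eq, Mgap_eq_of_const hn y _ 0 (fun j _ => by norm_num)]
  rw [mul_zero, mul_zero, max_self]; ring

lemma sum_psi_zero (hn : 2 ≤ n) (q : Fin n → ℝ) (hq1 : ∑ y, q y = 1) :
    ∑ y, q y * psiCSa n α y (fun _ => 0) = 2*α := by
  rw [Finset.sum_congr rfl (fun y _ => by rw [psi_zero_val hn y]), ← Finset.sum_mul, hq1,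
    one_mul]

lemma psi_spike_self (hn : 2 ≤ n) (hα1 : α ≤ 1/2) (J : Fin n) :
    psiCSa n α J (fun j => if j = J then (1:ℝ) else 0) = 0 := by
  rw [psiCSa_eq, Mgap_eq_of_const hn J _ (-1)
    (fun j hj => by rw [if_pos rfl, if_neg hj]; norm_num)]
  rw [max_eq_left (by linarith)]
  ring

lemma psi_spike_other (hn : 2 ≤ n) (hα1 : α ≤ 1/2) {J y : Fin n} (h : J ≠ y) :
    psiCSa n α y (fun j => if j = J then (1:ℝ) else 0) = 2 := by
  have hMg : Mgap n y (fun j => if j = J then (1:ℝ) else 0) = 1 := by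
    refine le_antisymm (Mgap_le_of hn y _ fun j hj => ?_) ?_
    · refine max_le ?_ (by norm_num)
      have h1 : (if j = J then (1:ℝ) else 0) ≤ 1 := by split_ifs <;> norm_num
      have h2 : (0:ℝ) ≤ (if y = J then (1:ℝ) else 0) := by split_ifs <;> norm_num
      linarith
    · have h3 := le_Mgap hn y (fun j => if j = J then (1:ℝ) else 0) h
      refine le_trans ?_ h3
      have heq : ((fun j : Fin n => if j = J then (1:ℝ) else 0) J
          - (fun j : Fin n => if j = J then (1:ℝ) else 0) y) = 1 := by
        show ((if J = J then (1:ℝ) else 0) - (if y = J then (1:ℝ) else 0)) = 1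
        rw [if_pos rfl, if_neg (fun hc : y = J => h hc.symm)]; norm_num
      rw [heq]
      norm_num
  rw [psiCSa_eq, hMg]
  rw [mul_one, mul_one, max_eq_right (by linarith)]
  ring

lemma sum_psi_spike (hn : 2 ≤ n) (hα1 : α ≤ 1/2) (q : Fin n → ℝ) (hq1 : ∑ y, q y = 1)
    (J : Fin n) :
    ∑ y, q y * psiCSa n α y (fun j => if j = J then (1:ℝ) else 0) = 2*(1 - q J) := by
  have hsplit : ∑ y, q y * psiCSa n α y (fun j => if j = J then (1:ℝ) else 0)
      = q J * psiCSa n α J (fun j => if j = J then (1:ℝ) else 0)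
        + ∑ y ∈ Finset.univ.erase J, q y * psiCSa n α y (fun j => if j = J then (1:ℝ) else 0) :=
    (Finset.add_sum_erase _ _ (Finset.mem_univ J)).symm
  have hrsum : ∑ y ∈ Finset.univ.erase J, q y = 1 - q J := by
    have := Finset.add_sum_erase Finset.univ q (Finset.mem_univ J)
    linarith [hq1]
  rw [hsplit, psi_spike_self hn hα1 J,
    Finset.sum_congr rfl (fun y hy => by
      rw [psi_spike_other hn hα1 (fun hc : J = y => (Finset.ne_of_mem_erase hy) hc.symm)]),
    ← Finset.sum_mul, hrsum]
  ring

lemma lstar_le (hn : 2 ≤ n) (q : Fin n → ℝ) (hq1 : ∑ y, q y = 1) (t : Fin (n+1)) :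
    min α (1 - ⨆ y, q y) ≤ ∑ y, q y * abstainLoss n α y t := by
  have hNE : Nonempty (Fin n) := ⟨⟨0, by omega⟩⟩
  induction t using Fin.lastCases with
  | last => rw [sum_loss_last α q hq1]; exact min_le_left _ _
  | cast i =>
    rw [sum_loss_castSucc α q hq1 i]
    exact le_trans (min_le_right _ _) (by have := le_fin_ciSup q i; linarith)

lemma abstainLoss_nonneg (hα0 : 0 ≤ α) (y : Fin n) (t : Fin (n+1)) :
    0 ≤ abstainLoss n α y t := by
  unfold abstainLoss; split_ifs <;> norm_num
  exact hα0

lemma abstainLoss_le_one (hα1 : α ≤ 1/2) (y : Fin n) (t : Fin (n+1)) :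
    abstainLoss n α y t ≤ 1 := by
  unfold abstainLoss; split_ifs <;> try norm_num
  linarith

lemma psiCSa_nonneg (hn : 2 ≤ n) (hα0 : 0 ≤ α) (y : Fin n) (u : Fin n → ℝ) :
    0 ≤ psiCSa n α y u := by
  rw [psiCSa_eq]
  have h1 := neg_one_le_Mgap hn y u
  have h2 : α * (-1) ≤ α * Mgap n y u := mul_le_mul_of_nonneg_left h1 hα0
  have h3 := le_max_left (α * Mgap n y u) ((1-α) * Mgap n y u)
  linarith

lemma argmax_sel_spec (hn : 2 ≤ n) (q : Fin n → ℝ) :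
    ∃ J : Fin n, ((∀ k, q k ≤ q J) ∧ (∀ k, k < J → ∃ k', q k < q k')) ∧
      (∀ j, ((∀ k, q k ≤ q j) ∧ (∀ k, k < j → ∃ k', q k < q k')) → j = J) := by
  have hNE : Nonempty (Fin n) := ⟨⟨0, by omega⟩⟩
  classical
  set T := Finset.univ.filter (fun y : Fin n => ∀ k, q k ≤ q y) with hT
  have hTne : T.Nonempty := by
    obtain ⟨i, hi, _⟩ := fin_ciSup_attained q
    exact ⟨i, by simp [hT]; exact hi⟩
  have hminmem := Finset.mem_filter.mp (T.min'_mem hTne)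
  refine ⟨T.min' hTne, ⟨hminmem.2, ?_⟩, ?_⟩
  · intro k hk
    by_contra hno
    push_neg at hno
    have hkT : k ∈ T := by rw [hT, Finset.mem_filter]; exact ⟨Finset.mem_univ k, hno⟩
    exact absurd (T.min'_le k hkT) (not_le.mpr hk)
  · intro j hj
    have hjT : j ∈ T := by rw [hT, Finset.mem_filter]; exact ⟨Finset.mem_univ j, hj.1⟩
    have h1 := T.min'_le j hjT
    rcases lt_or_eq_of_le h1 with h2 | h2
    · obtain ⟨k', hk'⟩ := hj.2 _ h2
      exact absurd (hminmem.2 k') (not_le.mpr hk')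
    · exact h2.symm

end values

section meascomp
variable {n : ℕ} {α τ : ℝ} {X : Type*} [MeasurableSpace X]

lemma measurable_Mgap_comp (hn : 2 ≤ n) (y : Fin n) {g : X → Fin n → ℝ} (hg : Measurable g) :
    Measurable (fun x => Mgap n y (g x)) := by
  have := nonempty_ne hn y
  unfold Mgap
  exact measurable_fin_ciSup fun j =>
    (((measurable_pi_apply j.1).comp hg).sub ((measurable_pi_apply y).comp hg)).max
      measurable_const

lemma measurable_psi_comp (hn : 2 ≤ n) (y : Fin n) {g : X → Fin n → ℝ} (hg : Measurable g) :
    Measurable (fun x => psiCSa n α y (g x)) := by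
  have heq : (fun x => psiCSa n α y (g x))
      = fun x => 2 * max (α * Mgap n y (g x)) ((1-α) * Mgap n y (g x)) + 2*α := by
    funext x; rw [psiCSa_eq]
  rw [heq]
  have hM := measurable_Mgap_comp hn y hg
  exact (((hM.const_mul α).max (hM.const_mul (1-α))).const_mul 2).add measurable_const

lemma measurable_top1_comp (hn : 2 ≤ n) {g : X → Fin n → ℝ} (hg : Measurable g) :
    Measurable (fun x => top1 n (g x)) := by
  have : Nonempty (Fin n) := ⟨⟨0, by omega⟩⟩
  unfold top1
  exact measurable_fin_ciSup fun i => (measurable_pi_apply i).comp hg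

lemma measurable_top2_comp (hn : 2 ≤ n) {g : X → Fin n → ℝ} (hg : Measurable g) :
    Measurable (fun x => top2 n (g x)) := by
  have : Nonempty (Fin n) := ⟨⟨0, by omega⟩⟩
  unfold top2
  refine measurable_fin_ciInf fun i => ?_
  have := nonempty_ne hn i
  exact measurable_fin_ciSup fun j => (measurable_pi_apply j.1).comp hg

lemma measurable_predCS_comp (hn : 2 ≤ n) (hτ0 : 0 < τ) {g : X → Fin n → ℝ}
    (hg : Measurable g) : Measurable (fun x => predCS n τ (g x)) := by
  have hNE : Nonempty (Fin n) := ⟨⟨0, by omega⟩⟩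
  have hdiff : Measurable fun x => top1 n (g x) - top2 n (g x) :=
    (measurable_top1_comp hn hg).sub (measurable_top2_comp hn hg)
  apply measurable_to_countable'
  intro t
  induction t using Fin.lastCases with
  | last =>
    have hset : (fun x => predCS n τ (g x)) ⁻¹' {Fin.last n}
        = {x | τ < top1 n (g x) - top2 n (g x)}ᶜ := by
      ext x
      simp only [Set.mem_preimage, Set.mem_singleton_iff, Set.mem_compl_iff, Set.mem_setOf_eq]
      exact predCS_eq_last_iff
    rw [hset]
    exact (measurableSet_lt measurable_const hdiff).compl
  | cast i =>
    have hset : (fun x => predCS n τ (g x)) ⁻¹' {Fin.castSucc i}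
        = {x | τ < top1 n (g x) - top2 n (g x)} ∩ ⋂ j, {x | g x j ≤ g x i} := by
      ext x
      simp only [Set.mem_preimage, Set.mem_singleton_iff, Set.mem_inter_iff, Set.mem_iInter,
        Set.mem_setOf_eq]
      exact predCS_eq_castSucc_iff hτ0
    rw [hset]
    exact (measurableSet_lt measurable_const hdiff).inter
      (MeasurableSet.iInter fun j => measurableSet_le
        ((measurable_pi_apply j).comp hg) ((measurable_pi_apply i).comp hg))

lemma measurable_uncurry_fin {ϕ : X → Fin n → ℝ} (h : ∀ y, Measurable fun x => ϕ x y) :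
    Measurable (fun z : X × Fin n => ϕ z.1 z.2) := by
  classical
  have heq : (fun z : X × Fin n => ϕ z.1 z.2)
      = fun z => ∑ y, if z.2 = y then ϕ z.1 y else 0 := by
    funext z
    rw [Finset.sum_ite_eq Finset.univ z.2 (fun y => ϕ z.1 y), if_pos (Finset.mem_univ _)]
  rw [heq]
  refine Finset.measurable_sum _ fun y _ => ?_
  exact Measurable.ite (measurable_snd (measurableSet_singleton y))
    ((h y).comp measurable_fst) measurable_const

end meascomp

set_option maxHeartbeats 2000000 in
theorem psiCSa_excess_risk_bound (n : ℕ) (hn : 2 ≤ n)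
    (α : ℝ) (hα0 : 0 ≤ α) (hα1 : α ≤ 1 / 2)
    (τ : ℝ) (hτ0 : 0 < τ) (hτ1 : τ < 1)
    {X : Type*} [MeasurableSpace X] (D : Measure (X × Fin n)) [IsProbabilityMeasure D]
    (g : X → Fin n → ℝ) (hg : Measurable g) :
    (∫⁻ z, ENNReal.ofReal (abstainLoss n α z.2 (predCS n τ (g z.1))) ∂D) -
      (⨅ h : {h : X → Fin (n + 1) // Measurable h},
        ∫⁻ z, ENNReal.ofReal (abstainLoss n α z.2 (h.1 z.1)) ∂D) ≤
    ((∫⁻ z, ENNReal.ofReal (psiCSa n α z.2 (g z.1)) ∂D) -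
      (⨅ g' : {g' : X → Fin n → ℝ // Measurable g'},
        ∫⁻ z, ENNReal.ofReal (psiCSa n α z.2 (g'.1 z.1)) ∂D)) /
      ENNReal.ofReal (2 * min τ (1 - τ)) := by
  classical
  have hNE : Nonempty (Fin n) := ⟨⟨0, by omega⟩⟩
  -- scalar constants
  set cR := 2 * min τ (1 - τ) with hcR
  have hcRpos : 0 < cR := by
    have : 0 < min τ (1-τ) := lt_min hτ0 (by linarith)
    rw [hcR]; linarith
  set k := ENNReal.ofReal cR with hk
  have hk0 : k ≠ 0 := (ENNReal.ofReal_pos.mpr hcRpos).ne'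
  have hkT : k ≠ ⊤ := ENNReal.ofReal_ne_top
  -- marginal and conditional probabilities
  set μ := D.map Prod.fst with hμ
  haveI : IsProbabilityMeasure μ := by
    rw [hμ]; exact Measure.isProbabilityMeasure_map measurable_fst.aemeasurable
  set p : Fin n → X → ℝ≥0∞ :=
    fun y => ((D.restrict (Prod.snd ⁻¹' {y})).map Prod.fst).rnDeriv μ with hp
  have hpmeas : ∀ y, Measurable (p y) := fun y => Measure.measurable_rnDeriv _ _
  set q : Fin n → X → ℝ := fun y x => (p y x).toReal with hq
  have hqmeas : ∀ y, Measurable (q y) := fun y => (hpmeas y).ennreal_toReal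
  have hq0 : ∀ y x, 0 ≤ q y x := fun y x => ENNReal.toReal_nonneg
  have hgood : ∀ᵐ x ∂μ, (∑ y, q y x = 1) ∧ ∀ y, p y x = ENNReal.ofReal (q y x) := by
    have hsump := sum_rnDeriv_ae D
    filter_upwards [hsump] with x hx
    have hx' : ∑ y, p y x = 1 := hx
    have hfin : ∀ y, p y x ≠ ⊤ := by
      intro y
      have hle : p y x ≤ ∑ y', p y' x :=
        Finset.single_le_sum (f := fun y' => p y' x) (fun _ _ => zero_le) (Finset.mem_univ y)
      rw [hx'] at hle
      exact (lt_of_le_of_lt hle ENNReal.one_lt_top).ne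
    constructor
    · have h2 : ∑ y, q y x = (∑ y, p y x).toReal :=
        (ENNReal.toReal_sum (fun y _ => hfin y)).symm
      rw [h2, hx', ENNReal.toReal_one]
    · intro y; exact (ENNReal.ofReal_toReal (hfin y)).symm
  -- measurabilities of integrands
  have hpredm : Measurable (fun x => predCS n τ (g x)) := measurable_predCS_comp hn hτ0 hg
  have hlossa : ∀ y : Fin n, Measurable fun x => abstainLoss n α y (predCS n τ (g x)) :=
    fun y => Measurable.comp (measurable_of_countable (abstainLoss n α y)) hpredm
  have hpsig : ∀ y : Fin n, Measurable fun x => psiCSa n α y (g x) :=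
    fun y => measurable_psi_comp hn y hg
  -- the near-optimal surrogate function
  set v : X → Fin n → ℝ := fun x j =>
    if α ≤ 1 - (⨆ y, q y x) then 0
    else if (∀ k, q k x ≤ q j x) ∧ (∀ k, k < j → ∃ k', q k x < q k' x) then 1 else 0 with hv
  have hQmeas : Measurable fun x => ⨆ y, q y x := measurable_fin_ciSup hqmeas
  have houter : MeasurableSet {x : X | α ≤ 1 - (⨆ y, q y x)} :=
    measurableSet_le measurable_const (measurable_const.sub hQmeas)
  have hvmeas : Measurable v := by
    refine measurable_pi_lambda _ fun j => ?_
    refine Measurable.ite houter measurable_const ?_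
    refine Measurable.ite ?_ measurable_const measurable_const
    have hseteq : {x : X | (∀ k, q k x ≤ q j x) ∧ (∀ k, k < j → ∃ k', q k x < q k' x)}
        = (⋂ k, {x | q k x ≤ q j x}) ∩ (⋂ k, {x | k < j → ∃ k', q k x < q k' x}) := by
      ext x
      simp only [Set.mem_setOf_eq, Set.mem_inter_iff, Set.mem_iInter]
    rw [hseteq]
    refine MeasurableSet.inter
      (MeasurableSet.iInter fun kk => measurableSet_le (hqmeas kk) (hqmeas j))
      (MeasurableSet.iInter fun kk => ?_)
    by_cases hkj : kk < j
    · have h1 : {x : X | kk < j → ∃ k', q kk x < q k' x}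
          = ⋃ k', {x | q kk x < q k' x} := by
        ext x; simp [hkj]
      rw [h1]
      exact MeasurableSet.iUnion fun k' => measurableSet_lt (hqmeas kk) (hqmeas k')
    · have h1 : {x : X | kk < j → ∃ k', q kk x < q k' x} = Set.univ := by
        ext x; simp [hkj]
      rw [h1]
      exact MeasurableSet.univ
  have hpsiv : ∀ y : Fin n, Measurable fun x => psiCSa n α y (v x) :=
    fun y => measurable_psi_comp hn y hvmeas
  -- the risk identity
  have erEq : ∀ (ϕ : X → Fin n → ℝ), (∀ y, Measurable fun x => ϕ x y) → (∀ x y, 0 ≤ ϕ x y) →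
      ∫⁻ z, ENNReal.ofReal (ϕ z.1 z.2) ∂D
        = ∫⁻ x, ENNReal.ofReal (∑ y, q y x * ϕ x y) ∂μ := by
    intro ϕ hϕ hϕ0
    have hF : Measurable fun z : X × Fin n => ENNReal.ofReal (ϕ z.1 z.2) :=
      (measurable_uncurry_fin hϕ).ennreal_ofReal
    have hdec := decomp D (fun z => ENNReal.ofReal (ϕ z.1 z.2)) hF
    rw [← hμ] at hdec
    rw [hdec]
    refine lintegral_congr_ae ?_
    filter_upwards [hgood] with x hx
    rw [ENNReal.ofReal_sum_of_nonneg (fun y _ => mul_nonneg (hq0 y x) (hϕ0 x y))]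
    refine Finset.sum_congr rfl fun y _ => ?_
    show p y x * ENNReal.ofReal (ϕ x y) = ENNReal.ofReal (q y x * ϕ x y)
    rw [hx.2 y, ← ENNReal.ofReal_mul (hq0 y x)]
  -- name the risks
  set IA := ∫⁻ z, ENNReal.ofReal (abstainLoss n α z.2 (predCS n τ (g z.1))) ∂D with hIAdef
  set IW := ∫⁻ z, ENNReal.ofReal (psiCSa n α z.2 (g z.1)) ∂D with hIWdef
  set Binf := ⨅ h : {h : X → Fin (n + 1) // Measurable h},
    ∫⁻ z, ENNReal.ofReal (abstainLoss n α z.2 (h.1 z.1)) ∂D with hBinfdef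
  set Einf := ⨅ g' : {g' : X → Fin n → ℝ // Measurable g'},
    ∫⁻ z, ENNReal.ofReal (psiCSa n α z.2 (g'.1 z.1)) ∂D with hEinfdef
  set IE := ∫⁻ z, ENNReal.ofReal (psiCSa n α z.2 (v z.1)) ∂D with hIEdef
  have hIAeq : IA = ∫⁻ x,
      ENNReal.ofReal (∑ y, q y x * abstainLoss n α y (predCS n τ (g x))) ∂μ :=
    erEq _ hlossa (fun x y => abstainLoss_nonneg hα0 y _)
  have hIWeq : IW = ∫⁻ x, ENNReal.ofReal (∑ y, q y x * psiCSa n α y (g x)) ∂μ :=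
    erEq _ hpsig (fun x y => psiCSa_nonneg hn hα0 y _)
  have hIEeq : IE = ∫⁻ x, ENNReal.ofReal (∑ y, q y x * psiCSa n α y (v x)) ∂μ :=
    erEq _ hpsiv (fun x y => psiCSa_nonneg hn hα0 y _)
  -- values of v
  have hvcases : ∀ x, (v x = fun _ => (0:ℝ))
      ∨ ∃ J, ((∀ kk, q kk x ≤ q J x) ∧ (∀ kk, kk < J → ∃ k', q kk x < q k' x))
          ∧ v x = fun j => if j = J then (1:ℝ) else 0 := by
    intro x
    by_cases hb : α ≤ 1 - (⨆ y, q y x)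
    · left; funext j; simp only [hv]; rw [if_pos hb]
    · right
      obtain ⟨J, hJ1, hJ2⟩ := argmax_sel_spec hn (fun y => q y x)
      refine ⟨J, hJ1, funext fun j => ?_⟩
      simp only [hv]
      rw [if_neg hb]
      by_cases hjJ : j = J
      · subst hjJ; rw [if_pos hJ1, if_pos rfl]
      · rw [if_neg (fun hc => hjJ (hJ2 j hc)), if_neg hjJ]
  have hvpsi2 : ∀ x (y : Fin n), psiCSa n α y (v x) ≤ 2 := by
    intro x y
    rcases hvcases x with h0 | ⟨J, _, hJ⟩
    · rw [h0, psi_zero_val hn]; linarith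
    · rw [hJ]; rcases eq_or_ne J y with rfl | hJy
      · rw [psi_spike_self hn hα1]; norm_num
      · rw [psi_spike_other hn hα1 hJy]
  -- conditional surrogate value of v
  have hEbound : ∀ᵐ x ∂μ, ∑ y, q y x * psiCSa n α y (v x)
      ≤ min (2*α) (2*(1 - ⨆ y, q y x)) := by
    filter_upwards [hgood] with x hx
    by_cases hb : α ≤ 1 - (⨆ y, q y x)
    · have hv0 : v x = fun _ => (0:ℝ) := by funext j; simp only [hv]; rw [if_pos hb]
      rw [hv0, sum_psi_zero hn _ hx.1, min_eq_left (by linarith)]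
    · obtain ⟨J, hJ1, hJ2⟩ := argmax_sel_spec hn (fun y => q y x)
      have hvs : v x = fun j => if j = J then (1:ℝ) else 0 := by
        funext j; simp only [hv]; rw [if_neg hb]
        by_cases hjJ : j = J
        · subst hjJ; rw [if_pos hJ1, if_pos rfl]
        · rw [if_neg (fun hc => hjJ (hJ2 j hc)), if_neg hjJ]
      have hQJ : q J x = ⨆ y, q y x :=
        le_antisymm (le_fin_ciSup (fun y => q y x) J) (ciSup_le hJ1.1)
      rw [hvs, sum_psi_spike hn hα1 _ hx.1 J, hQJ,
        min_eq_right (by push_neg at hb; linarith)]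
  -- key inequality for an arbitrary classifier
  have key : ∀ hcl : X → Fin (n+1), Measurable hcl →
      k * IA + IE ≤ IW + k * ∫⁻ z, ENNReal.ofReal (abstainLoss n α z.2 (hcl z.1)) ∂D := by
    intro hcl hclm
    have hlossb : ∀ y : Fin n, Measurable fun x => abstainLoss n α y (hcl x) :=
      fun y => Measurable.comp (measurable_of_countable (abstainLoss n α y)) hclm
    have hIBeq : (∫⁻ z, ENNReal.ofReal (abstainLoss n α z.2 (hcl z.1)) ∂D)
        = ∫⁻ x, ENNReal.ofReal (∑ y, q y x * abstainLoss n α y (hcl x)) ∂μ :=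
      erEq _ hlossb (fun x y => abstainLoss_nonneg hα0 y _)
    have haFm : Measurable fun x => ∑ y, q y x * abstainLoss n α y (predCS n τ (g x)) :=
      Finset.measurable_sum _ fun y _ => (hqmeas y).mul (hlossa y)
    have heFm : Measurable fun x => ∑ y, q y x * psiCSa n α y (v x) :=
      Finset.measurable_sum _ fun y _ => (hqmeas y).mul (hpsiv y)
    have hwFm : Measurable fun x => ∑ y, q y x * psiCSa n α y (g x) :=
      Finset.measurable_sum _ fun y _ => (hqmeas y).mul (hpsig y)
    have hbFm : Measurable fun x => ∑ y, q y x * abstainLoss n α y (hcl x) :=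
      Finset.measurable_sum _ fun y _ => (hqmeas y).mul (hlossb y)
    have haF0 : ∀ x, 0 ≤ ∑ y, q y x * abstainLoss n α y (predCS n τ (g x)) :=
      fun x => Finset.sum_nonneg fun y _ => mul_nonneg (hq0 y x) (abstainLoss_nonneg hα0 y _)
    have heF0 : ∀ x, 0 ≤ ∑ y, q y x * psiCSa n α y (v x) :=
      fun x => Finset.sum_nonneg fun y _ => mul_nonneg (hq0 y x) (psiCSa_nonneg hn hα0 y _)
    have hwF0 : ∀ x, 0 ≤ ∑ y, q y x * psiCSa n α y (g x) :=
      fun x => Finset.sum_nonneg fun y _ => mul_nonneg (hq0 y x) (psiCSa_nonneg hn hα0 y _)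
    have hbF0 : ∀ x, 0 ≤ ∑ y, q y x * abstainLoss n α y (hcl x) :=
      fun x => Finset.sum_nonneg fun y _ => mul_nonneg (hq0 y x) (abstainLoss_nonneg hα0 y _)
    have hpt : ∀ᵐ x ∂μ,
        ENNReal.ofReal (cR * ∑ y, q y x * abstainLoss n α y (predCS n τ (g x)))
          + ENNReal.ofReal (∑ y, q y x * psiCSa n α y (v x))
        ≤ ENNReal.ofReal (∑ y, q y x * psiCSa n α y (g x))
          + ENNReal.ofReal (cR * ∑ y, q y x * abstainLoss n α y (hcl x)) := by
      filter_upwards [hgood, hEbound] with x hx hEb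
      have hmaster := master hn hα0 hα1 hτ0 hτ1 (fun y => q y x) (fun y => hq0 y x)
        hx.1 (g x)
      rw [← hcR] at hmaster
      have hls := lstar_le (α := α) hn (fun y => q y x) hx.1 (hcl x)
      have hmins : min (2*α) (2*(1 - ⨆ y, q y x)) = 2 * min α (1 - ⨆ y, q y x) :=
        min_two_mul _ _
      rw [hmins] at hEb
      have hcm : cR * min α (1 - ⨆ y, q y x)
          ≤ cR * (∑ y, q y x * abstainLoss n α y (hcl x)) :=
        mul_le_mul_of_nonneg_left hls (le_of_lt hcRpos)
      have hreal : cR * (∑ y, q y x * abstainLoss n α y (predCS n τ (g x)))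
            + ∑ y, q y x * psiCSa n α y (v x)
          ≤ (∑ y, q y x * psiCSa n α y (g x))
            + cR * (∑ y, q y x * abstainLoss n α y (hcl x)) := by
        nlinarith [hmaster, hEb, hcm]
      calc ENNReal.ofReal (cR * ∑ y, q y x * abstainLoss n α y (predCS n τ (g x)))
            + ENNReal.ofReal (∑ y, q y x * psiCSa n α y (v x))
          = ENNReal.ofReal (cR * (∑ y, q y x * abstainLoss n α y (predCS n τ (g x)))
              + ∑ y, q y x * psiCSa n α y (v x)) :=
            (ENNReal.ofReal_add (mul_nonneg hcRpos.le (haF0 x)) (heF0 x)).symm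
        _ ≤ ENNReal.ofReal ((∑ y, q y x * psiCSa n α y (g x))
              + cR * (∑ y, q y x * abstainLoss n α y (hcl x))) :=
            ENNReal.ofReal_le_ofReal hreal
        _ = _ := ENNReal.ofReal_add (hwF0 x) (mul_nonneg hcRpos.le (hbF0 x))
    have hint := lintegral_mono_ae hpt
    have hm1 : Measurable fun x =>
        ENNReal.ofReal (cR * ∑ y, q y x * abstainLoss n α y (predCS n τ (g x))) :=
      (haFm.const_mul cR).ennreal_ofReal
    have hm3 : Measurable fun x => ENNReal.ofReal (∑ y, q y x * psiCSa n α y (g x)) :=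
      hwFm.ennreal_ofReal
    rw [lintegral_add_left hm1, lintegral_add_left hm3] at hint
    have hof : ∀ (f : X → ℝ), Measurable f →
        ∫⁻ x, ENNReal.ofReal (cR * f x) ∂μ = k * ∫⁻ x, ENNReal.ofReal (f x) ∂μ := by
      intro f hfm
      rw [← lintegral_const_mul k hfm.ennreal_ofReal]
      refine lintegral_congr fun x => ?_
      rw [hk]
      exact ENNReal.ofReal_mul hcRpos.le
    rw [hof _ haFm, hof _ hbFm] at hint
    rw [← hIAeq, ← hIEeq, ← hIWeq, ← hIBeq] at hint
    exact hint
  -- comparisons with the infima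
  have hEinfIE : Einf ≤ IE := by
    have h := iInf_le (α := ℝ≥0∞) (fun gp : {g' : X → Fin n → ℝ // Measurable g'} =>
      ∫⁻ z, ENNReal.ofReal (psiCSa n α z.2 (gp.1 z.1)) ∂D) ⟨v, hvmeas⟩
    rw [hEinfdef]
    exact h
  have hEinfIW : Einf ≤ IW := by
    have h := iInf_le (α := ℝ≥0∞) (fun gp : {g' : X → Fin n → ℝ // Measurable g'} =>
      ∫⁻ z, ENNReal.ofReal (psiCSa n α z.2 (gp.1 z.1)) ∂D) ⟨g, hg⟩
    rw [hEinfdef]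
    exact h
  have key2 : k * IA + Einf ≤ IW + k * Binf := by
    have h1 : ∀ hcl : {h : X → Fin (n + 1) // Measurable h},
        k * IA + Einf ≤ IW + k * ∫⁻ z, ENNReal.ofReal (abstainLoss n α z.2 (hcl.1 z.1)) ∂D :=
      fun hcl => le_trans (add_le_add le_rfl hEinfIE) (key hcl.1 hcl.2)
    calc k * IA + Einf
        ≤ ⨅ hcl : {h : X → Fin (n + 1) // Measurable h},
          (IW + k * ∫⁻ z, ENNReal.ofReal (abstainLoss n α z.2 (hcl.1 z.1)) ∂D) := le_iInf h1
      _ = IW + k * Binf := by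
          rw [← ENNReal.add_iInf, ← ENNReal.mul_iInf_of_ne hk0 hkT, hBinfdef]
  -- finiteness
  have hIEle : IE ≤ 2 := by
    rw [hIEdef]
    calc (∫⁻ z, ENNReal.ofReal (psiCSa n α z.2 (v z.1)) ∂D) ≤ ∫⁻ _z, (2:ℝ≥0∞) ∂D :=
        lintegral_mono fun z =>
          le_trans (ENNReal.ofReal_le_ofReal (hvpsi2 z.1 z.2)) (by simp)
      _ = 2 := by rw [lintegral_const, measure_univ, mul_one]
  have hEinfT : Einf ≠ ⊤ :=
    (lt_of_le_of_lt (le_trans hEinfIE hIEle) (by norm_num : (2:ℝ≥0∞) < ⊤)).ne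
  -- conclusion
  rw [ENNReal.le_div_iff_mul_le (Or.inl hk0) (Or.inl hkT)]
  refine ENNReal.le_sub_of_add_le_right hEinfT ?_
  rcases le_total IA Binf with hab | hab
  · rw [tsub_eq_zero_of_le hab, zero_mul, zero_add]
    exact hEinfIW
  · have hmul : (IA - Binf) * k = IA * k - Binf * k :=
      ENNReal.sub_mul (fun _ _ => hkT)
    rw [hmul]
    have hBk : Binf * k ≤ IA * k := mul_le_mul_left hab k
    have hIA1 : IA ≤ 1 := by
      rw [hIAdef]
      calc (∫⁻ z, ENNReal.ofReal (abstainLoss n α z.2 (predCS n τ (g z.1))) ∂D)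
          ≤ ∫⁻ _z, (1:ℝ≥0∞) ∂D :=
            lintegral_mono fun z => ENNReal.ofReal_le_one.mpr (abstainLoss_le_one hα1 _ _)
        _ = 1 := by rw [lintegral_one, measure_univ]
    have hBinfIA : Binf ≤ IA := by
      have h := iInf_le (α := ℝ≥0∞) (fun hp : {h : X → Fin (n + 1) // Measurable h} =>
        ∫⁻ z, ENNReal.ofReal (abstainLoss n α z.2 (hp.1 z.1)) ∂D)
        ⟨fun x => predCS n τ (g x), hpredm⟩
      rw [hBinfdef]
      exact h
    have hBkT : Binf * k ≠ ⊤ :=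
      ENNReal.mul_ne_top (lt_of_le_of_lt (le_trans hBinfIA hIA1) ENNReal.one_lt_top).ne hkT
    refine (ENNReal.add_le_add_iff_right hBkT).mp ?_
    rw [add_right_comm, tsub_add_cancel_of_le hBk]
    calc IA * k + Einf = k * IA + Einf := by rw [mul_comm]
      _ ≤ IW + k * Binf := key2
      _ = IW + Binf * k := by rw [mul_comm k Binf]
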